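/- Let n ≥ 1 and γ > 0, and let (N_z)_{z∈ℤ^n} be an i.i.d. family of random variables, each with the Poisson distribution of parameter γ. Then there exists a constant c > 0, depending only on γ and n, such that almost surely there is a (random) N̄ ∈ ℕ with: for every integer N ≥ N̄ and every z ∈ ℤ^n with ‖z‖_∞ ≤ N, one has N_z ≤ c · log N. -/

import Mathlib

open MeasureTheory ProbabilityTheory

lemma poisson_tail_le (γ : NNReal) (k : ℕ) :
    poissonMeasure γ (Set.Ici k) ≤ ENNReal.ofReal (Real.exp γ * (2:ℝ)⁻¹ ^ k) := by
  have hg : Summable (fun m : ℕ => (2*(γ:ℝ))^m / m.factorial) :=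
    Real.summable_pow_div_factorial _
  have hsum : Summable (fun m : ℕ =>
      (Real.exp (-(γ:ℝ)) * (2:ℝ)⁻¹ ^ k) * ((2*(γ:ℝ))^m / m.factorial)) := hg.mul_left _
  have hnonneg : ∀ m : ℕ,
      0 ≤ (Real.exp (-(γ:ℝ)) * (2:ℝ)⁻¹ ^ k) * ((2*(γ:ℝ))^m / m.factorial) := by
    intro m; positivity
  calc poissonMeasure γ (Set.Ici k)
      = ∑' m, (Set.Ici k).indicator (poissonPMF γ) m := by
        rw [poissonMeasure, Measure.sum_apply _ measurableSet_Ici]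
        congr 1; ext m
        rw [Measure.smul_apply, Measure.dirac_apply' _ measurableSet_Ici]
        by_cases hm : m ∈ Set.Ici k
        · rw [Set.indicator_of_mem hm, Set.indicator_of_mem hm, Pi.one_apply, smul_eq_mul, mul_one]
          exact poissonPMFReal_ofReal_eq_poissonPMF γ m
        · rw [Set.indicator_of_notMem hm, Set.indicator_of_notMem hm, smul_zero]
    _ ≤ ∑' m, ENNReal.ofReal
        ((Real.exp (-(γ:ℝ)) * (2:ℝ)⁻¹ ^ k) * ((2*(γ:ℝ))^m / m.factorial)) := by
        refine ENNReal.tsum_le_tsum fun m => ?_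
        by_cases hm : m ∈ Set.Ici k
        · rw [Set.indicator_of_mem hm]
          show ENNReal.ofReal (poissonPMFReal γ m) ≤ _
          refine ENNReal.ofReal_le_ofReal ?_
          rw [poissonPMFReal]
          rw [mul_pow]
          have h2 : (2:ℝ)⁻¹ ^ k * (2:ℝ) ^ m ≥ 1 := by
            rw [inv_pow, ge_iff_le, ← div_eq_inv_mul, le_div_iff₀ (by positivity)]
            calc (1:ℝ) * 2 ^ k = 2 ^ k := by ring
              _ ≤ 2 ^ m := pow_le_pow_right₀ one_le_two hm
          have hfac : (0:ℝ) < m.factorial := by positivity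
          rw [div_le_iff₀ hfac]
          have : Real.exp (-(γ:ℝ)) * (2:ℝ)⁻¹ ^ k * ((2:ℝ)^m * (γ:ℝ)^m / m.factorial) * m.factorial
              = Real.exp (-(γ:ℝ)) * (γ:ℝ)^m * ((2:ℝ)⁻¹ ^ k * (2:ℝ)^m) := by
            field_simp
          rw [this]
          exact le_mul_of_one_le_right (by positivity) h2
        · rw [Set.indicator_of_notMem hm]
          exact zero_le
    _ = ENNReal.ofReal (∑' m, (Real.exp (-(γ:ℝ)) * (2:ℝ)⁻¹ ^ k) * ((2*(γ:ℝ))^m / m.factorial)) :=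
        (ENNReal.ofReal_tsum_of_nonneg hnonneg hsum).symm
    _ = ENNReal.ofReal (Real.exp γ * (2:ℝ)⁻¹ ^ k) := by
        rw [tsum_mul_left]
        congr 1
        have : ∑' m : ℕ, (2*(γ:ℝ))^m / m.factorial = Real.exp (2*(γ:ℝ)) := by
          rw [Real.exp_eq_exp_ℝ, NormedSpace.exp_eq_tsum_div]
        rw [this, mul_comm (Real.exp (-(γ:ℝ))) _, mul_assoc, ← Real.exp_add]
        rw [mul_comm]
        congr 1
        ring


/-- Claim (ii) in the proof of Lemma 2.4: if `(N_z)_{z ∈ ℤ^n}` is an i.i.d. family of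
Poisson(γ) random variables (the numbers of points of a Poisson point process of intensity
`γ` in the unit cubes `z + [0,1)^n`), then there is a constant `c > 0` depending only on
`γ` and `n` such that almost surely, for all large enough `N`, every `z` with
`‖z‖_∞ ≤ N` satisfies `N_z ≤ c log N`. -/
theorem stmt_10 (n : ℕ) (hn : 1 ≤ n) (γ : NNReal) (hγ : 0 < γ)
    {Ω : Type*} [MeasureSpace Ω] [IsProbabilityMeasure (ℙ : Measure Ω)]
    (N : (Fin n → ℤ) → Ω → ℕ) (hmeas : ∀ z, Measurable (N z))
    (hindep : iIndepFun N ℙ)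
    (hdist : ∀ z, Measure.map (N z) ℙ = poissonMeasure γ) :
    ∃ c : ℝ, 0 < c ∧
      ∀ᵐ ω ∂ℙ, ∃ N₀ : ℕ, ∀ M : ℕ, N₀ ≤ M →
        ∀ z : Fin n → ℤ, (∀ i, |z i| ≤ (M : ℤ)) →
          (N z ω : ℝ) ≤ c * Real.log M := by
  have hlog2 : (0:ℝ) < Real.log 2 := Real.log_pos one_lt_two
  set c : ℝ := (n + 2) / Real.log 2 with hc_def
  have hc : 0 < c := by positivity
  refine ⟨c, hc, ?_⟩
  set k : ℕ → ℕ := fun M => ⌊c * Real.log M⌋₊ + 1 with hk_def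
  set box : ℕ → Finset (Fin n → ℤ) :=
    fun M => Fintype.piFinset fun _ => Finset.Icc (-(M:ℤ)) (M:ℤ) with hbox_def
  set s : ℕ → Set Ω := fun M => ⋃ z ∈ box M, {ω | k M ≤ N z ω} with hs_def
  set C : ℝ := 3 ^ n * Real.exp γ with hC_def
  have hC3 : (3:ℝ) ≤ C := by
    have h1 : (1:ℝ) ≤ Real.exp γ := Real.one_le_exp γ.2
    have h3 : (3:ℝ) ≤ 3 ^ n := by
      calc (3:ℝ) = 3 ^ 1 := (pow_one 3).symm
      _ ≤ 3 ^ n := pow_le_pow_right₀ (by norm_num) hn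
    nlinarith
  -- measure bound on each event
  have hz_bound : ∀ (M : ℕ) (z : Fin n → ℤ),
      ℙ {ω | k M ≤ N z ω} ≤ ENNReal.ofReal (Real.exp γ * (2:ℝ)⁻¹ ^ k M) := by
    intro M z
    have : {ω | k M ≤ N z ω} = N z ⁻¹' Set.Ici (k M) := rfl
    rw [this, ← Measure.map_apply (hmeas z) measurableSet_Ici, hdist z]
    exact poisson_tail_le γ (k M)
  have hcard : ∀ M : ℕ, (box M).card = (2 * M + 1) ^ n := by
    intro M
    rw [hbox_def, Fintype.card_piFinset]
    simp [Int.card_Icc]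
    congr 1
    omega
  have hsM : ∀ M : ℕ, ℙ (s M) ≤
      ENNReal.ofReal (((2 * M + 1) ^ n : ℕ) * (Real.exp γ * (2:ℝ)⁻¹ ^ k M)) := by
    intro M
    calc ℙ (s M) ≤ ∑ z ∈ box M, ℙ {ω | k M ≤ N z ω} := measure_biUnion_finset_le _ _
      _ ≤ ∑ z ∈ box M, ENNReal.ofReal (Real.exp γ * (2:ℝ)⁻¹ ^ k M) :=
          Finset.sum_le_sum fun z _ => hz_bound M z
      _ = (box M).card • ENNReal.ofReal (Real.exp γ * (2:ℝ)⁻¹ ^ k M) := by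
          rw [Finset.sum_const]
      _ = ENNReal.ofReal (((2 * M + 1) ^ n : ℕ) * (Real.exp γ * (2:ℝ)⁻¹ ^ k M)) := by
          rw [hcard, nsmul_eq_mul, ← ENNReal.ofReal_natCast, ← ENNReal.ofReal_mul (by positivity)]
  -- real bound for M ≥ 2
  have hreal : ∀ M : ℕ, 2 ≤ M →
      (((2 * M + 1) ^ n : ℕ) : ℝ) * (Real.exp γ * (2:ℝ)⁻¹ ^ k M)
        ≤ 4 * C / ((M:ℝ) + 1) ^ 2 := by
    intro M hM
    have hM1 : (1:ℝ) ≤ (M:ℝ) := by exact_mod_cast hM.trans' (by norm_num)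
    have hMpos : (0:ℝ) < M := by linarith
    have h1 : (2:ℝ)⁻¹ ^ k M ≤ ((M:ℝ) ^ (n + 2))⁻¹ := by
      have hpow : (2:ℝ)⁻¹ ^ k M = Real.exp (-(k M * Real.log 2)) := by
        have h2 : (2:ℝ)⁻¹ = Real.exp (-(Real.log 2)) := by
          rw [Real.exp_neg, Real.exp_log two_pos]
        rw [h2, ← Real.exp_nat_mul, mul_neg]
      rw [hpow]
      have hk_ge : c * Real.log M ≤ (k M : ℝ) := (Nat.lt_floor_add_one _).le.trans (by
        rw [hk_def]; push_cast; simp)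
      have hexp : Real.exp (-((n + 2 : ℕ) * Real.log M)) = ((M:ℝ) ^ (n + 2))⁻¹ := by
        rw [Real.exp_neg, Real.exp_nat_mul, Real.exp_log hMpos]
      rw [← hexp]
      apply Real.exp_le_exp.mpr
      rw [neg_le_neg_iff]
      have hclog : c * Real.log 2 = (n + 2 : ℕ) := by
        rw [hc_def]; field_simp; norm_num
      calc ((n + 2 : ℕ):ℝ) * Real.log M = c * Real.log M * Real.log 2 := by
            rw [mul_comm c, mul_assoc, hclog]; ring
        _ ≤ (k M : ℝ) * Real.log 2 := by
            apply mul_le_mul_of_nonneg_right hk_ge hlog2.le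
    have h2 : (((2 * M + 1) ^ n : ℕ) : ℝ) ≤ 3 ^ n * (M:ℝ) ^ n := by
      push_cast
      rw [← mul_pow]
      apply pow_le_pow_left₀ (by positivity)
      linarith
    have h3 : (((2 * M + 1) ^ n : ℕ) : ℝ) * (Real.exp γ * (2:ℝ)⁻¹ ^ k M)
        ≤ (3 ^ n * (M:ℝ) ^ n) * (Real.exp γ * ((M:ℝ) ^ (n + 2))⁻¹) := by
      apply mul_le_mul h2 (mul_le_mul_of_nonneg_left h1 (Real.exp_pos _).le)
        (by positivity) (by positivity)
    refine h3.trans ?_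
    have key : (3 ^ n * (M:ℝ) ^ n) * (Real.exp γ * ((M:ℝ) ^ (n + 2))⁻¹) = C / (M:ℝ) ^ 2 := by
      rw [hC_def, pow_add]
      field_simp
    rw [key, div_le_div_iff₀ (by positivity) (by positivity)]
    have hCpos : (0:ℝ) < C := by linarith
    nlinarith [sq_nonneg ((M:ℝ) - 1)]
  -- uniform bound
  have hbnd : ∀ M : ℕ, ℙ (s M) ≤ ENNReal.ofReal (4 * C / ((M:ℝ) + 1) ^ 2) := by
    intro M
    rcases le_or_gt 2 M with hM | hM
    · exact (hsM M).trans (ENNReal.ofReal_le_ofReal (hreal M hM))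
    · refine (prob_le_one).trans ?_
      apply ENNReal.one_le_ofReal.mpr
      refine le_trans ?_ le_rfl
      have hM1 : (M:ℝ) + 1 ≤ 2 := by
        have : M ≤ 1 := by omega
        have : (M:ℝ) ≤ 1 := by exact_mod_cast this
        linarith
      have hpos : (0:ℝ) < ((M:ℝ) + 1) ^ 2 := by positivity
      rw [le_div_iff₀ hpos]
      nlinarith
  -- summability
  have hsummable : Summable (fun M : ℕ => 4 * C / ((M:ℝ) + 1) ^ 2) := by
    have h0 : Summable (fun M : ℕ => 1 / ((M:ℝ)) ^ 2) :=
      Real.summable_one_div_nat_pow.mpr (by norm_num)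
    have h1 : Summable (fun M : ℕ => 1 / ((M:ℝ) + 1) ^ 2) := by
      have := (summable_nat_add_iff 1).mpr h0
      simpa [Nat.cast_add] using this
    simpa [div_eq_mul_inv, one_div, mul_assoc] using h1.mul_left (4 * C)
  have htop : (∑' M, ℙ (s M)) ≠ ⊤ := by
    have h1 : (∑' M, ℙ (s M)) ≤ ∑' M : ℕ, ENNReal.ofReal (4 * C / ((M:ℝ) + 1) ^ 2) :=
      ENNReal.tsum_le_tsum hbnd
    have h2 : (∑' M : ℕ, ENNReal.ofReal (4 * C / ((M:ℝ) + 1) ^ 2))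
        = ENNReal.ofReal (∑' M : ℕ, 4 * C / ((M:ℝ) + 1) ^ 2) :=
      (ENNReal.ofReal_tsum_of_nonneg (fun M => by positivity) hsummable).symm
    rw [h2] at h1
    exact ne_top_of_le_ne_top ENNReal.ofReal_ne_top h1
  -- Borel–Cantelli
  filter_upwards [MeasureTheory.ae_eventually_notMem htop] with ω hω
  rw [Filter.eventually_atTop] at hω
  obtain ⟨N₀, hN₀⟩ := hω
  refine ⟨N₀, fun M hM z hz => ?_⟩
  have hzM : z ∈ box M := by
    rw [hbox_def, Fintype.mem_piFinset]
    intro i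
    rw [Finset.mem_Icc, ← abs_le]
    exact hz i
  have hnot := hN₀ M hM
  rw [hs_def] at hnot
  simp only [Set.mem_iUnion, Set.mem_setOf_eq, not_exists, not_le] at hnot
  have hlt : N z ω < k M := hnot z hzM
  have hle : N z ω ≤ ⌊c * Real.log M⌋₊ := by simp only [hk_def] at hlt; omega
  have hnn : 0 ≤ c * Real.log M := by
    rcases Nat.eq_zero_or_pos M with h | h
    · simp [h]
    · exact mul_nonneg hc.le (Real.log_nonneg (by exact_mod_cast h))
  calc (N z ω : ℝ) ≤ (⌊c * Real.log M⌋₊ : ℝ) := by exact_mod_cast hle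
    _ ≤ c * Real.log M := Nat.floor_le hnn
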